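/- In G = A ∗_C B the following holds: for every c ∈ C with c ≠ 1, there exists g ∈ G ∖ C with g⁻¹ c g ∈ C if and only if there exists q ∈ (A ∪ B) ∖ C with q⁻¹ c q ∈ C. Equivalently, Z_G(C) = Z_A(C) ∪ Z_B(C), where for a group K containing C as a subgroup, Z_K(C) denotes the union over all x ∈ K ∖ C with C ∩ x⁻¹Cx ≠ {1} of the sets {h ∈ C : x⁻¹ h x ∈ C}. -/

import Mathlib

open Monoid

universe u

/-- The two factors of the amalgam, indexed by `Bool`. -/
def Fac (A B : Type u) : Bool → Type u
  | true => A
  | false => B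

instance FacGroup (A B : Type u) [Group A] [Group B] : (b : Bool) → Group (Fac A B b)
  | true => inferInstanceAs (Group A)
  | false => inferInstanceAs (Group B)

variable {A B C : Type u} [Group A] [Group B] [Group C]

/-- The family of monomorphisms `C → A`, `C → B`. -/
def amalgHom (φ : C →* A) (ψ : C →* B) : (b : Bool) → C →* Fac A B b
  | true => φ
  | false => ψ

variable (φ : C →* A) (ψ : C →* B)

/-- The amalgamated free product `G = A ∗_C B`, i.e. the pushout of `φ` and `ψ`. -/
abbrev Amalg : Type u := Monoid.PushoutI (amalgHom φ ψ)

/-- The factor `A`, identified with its image in `G = A ∗_C B`. -/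
def facA : Subgroup (Amalg φ ψ) := (Monoid.PushoutI.of (φ := amalgHom φ ψ) true).range

/-- The factor `B`, identified with its image in `G = A ∗_C B`. -/
def facB : Subgroup (Amalg φ ψ) := (Monoid.PushoutI.of (φ := amalgHom φ ψ) false).range

/-- The amalgamated subgroup `C`, identified with its image in `G = A ∗_C B`. -/
def amalgC : Subgroup (Amalg φ ψ) := (Monoid.PushoutI.base (amalgHom φ ψ)).range

/-- `c * g₁ ⋯ gₙ` (with the list `L = [g₁, …, gₙ]`) is a reduced form:
`c ∈ C`, each `gᵢ ∈ (A ∪ B) ∖ C`, and consecutive letters lie in different factors. -/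
def ReducedForm (c : Amalg φ ψ) (L : List (Amalg φ ψ)) : Prop :=
  c ∈ amalgC φ ψ ∧
  (∀ x ∈ L, (x ∈ facA φ ψ ∨ x ∈ facB φ ψ) ∧ x ∉ amalgC φ ψ) ∧
  L.Chain' (fun x y => (x ∈ facA φ ψ → y ∈ facB φ ψ) ∧ (x ∈ facB φ ψ → y ∈ facA φ ψ))

/-- A reduced form `c * g₁ ⋯ gₙ` is cyclically reduced if `n = 0`, or `n = 1` and the
element is not conjugate to an element of `C`, or `n ≥ 2` and `g₁`, `gₙ` lie in different
factors. -/
def CyclicallyReducedForm (c : Amalg φ ψ) (L : List (Amalg φ ψ)) : Prop :=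
  ReducedForm φ ψ c L ∧
  (L.length = 0 ∨
    (L.length = 1 ∧ ∀ x : Amalg φ ψ, x⁻¹ * (c * L.prod) * x ∉ amalgC φ ψ) ∨
    (2 ≤ L.length ∧ ∀ x y : Amalg φ ψ, x ∈ L.head? → y ∈ L.getLast? →
      ((x ∈ facA φ ψ → y ∈ facB φ ψ) ∧ (x ∈ facB φ ψ → y ∈ facA φ ψ))))

/-- An element of `G = A ∗_C B` is cyclically reduced if it has a cyclically reduced
reduced form. -/
def CyclicallyReduced (g : Amalg φ ψ) : Prop :=
  ∃ (c : Amalg φ ψ) (L : List (Amalg φ ψ)), g = c * L.prod ∧ CyclicallyReducedForm φ ψ c L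

namespace AmalgAux

open Monoid.PushoutI Subgroup

variable {ι : Type*} {G : ι → Type*} [∀ i, Group (G i)] {H : Type*} [Group H]
  {φ : ∀ i, H →* G i}

lemma of_mem_base (hφ : ∀ i, Function.Injective (φ i)) {i : ι} {x : G i}
    (h : Monoid.PushoutI.of (φ := φ) i x ∈ (Monoid.PushoutI.base φ).range) :
    x ∈ (φ i).range := by
  obtain ⟨y, hy⟩ := h
  rw [← Monoid.PushoutI.of_apply_eq_base φ i y] at hy
  exact ⟨y, Monoid.PushoutI.of_injective hφ i hy⟩

lemma exists_reduced_word (hφ : ∀ i, Function.Injective (φ i)) (g : Monoid.PushoutI φ) :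
    ∃ (h : H) (w : Monoid.CoprodI.Word G), Monoid.PushoutI.Reduced φ w ∧
      g = Monoid.PushoutI.base φ h * Monoid.PushoutI.ofCoprodI w.prod := by
  classical
  obtain ⟨d⟩ := NormalWord.transversal_nonempty φ hφ
  let w : Monoid.PushoutI.NormalWord d := Monoid.PushoutI.NormalWord.equiv g
  have hg : w.prod = g := Monoid.PushoutI.NormalWord.equiv.symm_apply_apply g
  refine ⟨w.head, w.toWord, ?_, hg ▸ rfl⟩
  rintro ⟨i, x⟩ hl hx
  have hset : x ∈ d.set i := w.normalized i x hl
  have hne : x ≠ 1 := w.toWord.ne_one _ hl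
  have hinj := (d.compl i).1
  have := hinj (a₁ := (⟨x, hx⟩, ⟨1, d.one_mem i⟩)) (a₂ := (⟨1, one_mem _⟩, ⟨x, hset⟩))
    (by simp)
  exact hne (congrArg (fun p => (p.1 : G i)) this)

lemma conj_letter (hφ : ∀ i, Function.Injective (φ i)) (c : H) {w : Monoid.CoprodI.Word G}
    (hw : Monoid.PushoutI.Reduced φ w) {i : ι} {g : G i} {t : List (Σ i, G i)}
    (hlist : w.toList = ⟨i, g⟩ :: t)
    (hconj : (Monoid.PushoutI.ofCoprodI w.prod)⁻¹ * Monoid.PushoutI.base φ c *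
      Monoid.PushoutI.ofCoprodI w.prod ∈ (Monoid.PushoutI.base φ).range) :
    g⁻¹ * φ i c * g ∈ (φ i).range := by
  by_contra ha
  set a : G i := g⁻¹ * φ i c * g with ha_def
  have ha1 : a ≠ 1 := fun h => ha (h ▸ one_mem _)
  -- letters of t are reduced letters
  have htmem : ∀ l ∈ t, l ∈ w.toList := fun l hl => hlist ▸ List.mem_cons_of_mem _ hl
  -- the new word
  let L : List (Σ i, G i) := (t.reverse.map fun p => ⟨p.1, p.2⁻¹⟩) ++ ⟨i, a⟩ :: t
  have hLmap : L.map Sigma.fst = (t.map Sigma.fst).reverse ++ i :: t.map Sigma.fst := by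
    simp [L, List.map_reverse]
  have hchain : (w.toList.map Sigma.fst).Chain' (· ≠ ·) :=
    (List.isChain_map Sigma.fst).2 w.chain_ne
  have hchain' : ((i :: t.map Sigma.fst)).Chain' (· ≠ ·) := by
    rw [hlist] at hchain; simpa using hchain
  have hchainL : (L.map Sigma.fst).Chain' (· ≠ ·) := by
    rw [hLmap]
    refine List.isChain_append.2 ⟨?_, hchain', ?_⟩
    · rw [List.isChain_reverse]
      exact (List.isChain_cons.1 hchain').2.imp fun _ _ h => h.symm
    · intro x hx y hy
      simp only [List.getLast?_reverse] at hx
      simp only [List.head?_cons, Option.mem_def, Option.some.injEq] at hy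
      subst hy
      exact ((List.isChain_cons.1 hchain').1 x hx).symm
  let w' : Monoid.CoprodI.Word G :=
    { toList := L
      ne_one := by
        intro l hl
        simp only [L, List.mem_append, List.mem_map, List.mem_reverse, List.mem_cons] at hl
        rcases hl with ⟨p, hp, rfl⟩ | rfl | hl
        · exact fun h => w.ne_one p (htmem p hp) (inv_eq_one.1 h)
        · exact ha1
        · exact w.ne_one l (htmem l hl)
      chain_ne := (List.isChain_map Sigma.fst).1 hchainL }
  have hw'red : Monoid.PushoutI.Reduced φ w' := by
    intro l hl
    simp only [w', L, List.mem_append, List.mem_map, List.mem_reverse, List.mem_cons] at hl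
    rcases hl with ⟨p, hp, rfl⟩ | rfl | hl
    · exact fun h => hw p (htmem p hp) ((inv_mem_iff).1 h)
    · exact ha
    · exact hw l (htmem l hl)
  -- compute the image of the product
  have prod_eq : ∀ u : Monoid.CoprodI.Word G, Monoid.PushoutI.ofCoprodI u.prod =
      (u.toList.map fun l => Monoid.PushoutI.of (φ := φ) l.1 l.2).prod := by
    intro u
    rw [Monoid.CoprodI.Word.prod, map_list_prod, List.map_map]
    congr 1
  set F : (Σ i, G i) → Monoid.PushoutI φ := fun l => Monoid.PushoutI.of l.1 l.2 with hF
  set P : Monoid.PushoutI φ := (t.map F).prod with hP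
  have h1 : ((t.reverse.map fun p => (⟨p.1, p.2⁻¹⟩ : Σ i, G i)).map F).prod = P⁻¹ := by
    rw [hP, List.prod_inv_reverse, List.map_map, List.map_map, ← List.map_reverse]
    congr 1
  have hprod : Monoid.PushoutI.ofCoprodI w'.prod =
      (Monoid.PushoutI.ofCoprodI w.prod)⁻¹ * Monoid.PushoutI.base φ c *
        Monoid.PushoutI.ofCoprodI w.prod := by
    have hWa : Monoid.PushoutI.ofCoprodI w.prod = F ⟨i, g⟩ * P := by
      rw [prod_eq, hlist]; simp [hF, hP]
    have hW' : Monoid.PushoutI.ofCoprodI w'.prod = P⁻¹ * F ⟨i, a⟩ * (P) := by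
      rw [prod_eq]
      show (L.map F).prod = _
      rw [List.map_append, List.prod_append, h1, List.map_cons, List.prod_cons, ← hP,
        mul_assoc]
    have hFa : F ⟨i, a⟩ = (F ⟨i, g⟩)⁻¹ * Monoid.PushoutI.base φ c * F ⟨i, g⟩ := by
      simp only [hF, ha_def]
      rw [map_mul, map_mul, map_inv, Monoid.PushoutI.of_apply_eq_base]
    rw [hW', hWa, hFa]
    group
  have := Monoid.PushoutI.Reduced.eq_empty_of_mem_range hφ hw'red (hprod ▸ hconj)
  have : L = [] := congrArg Monoid.CoprodI.Word.toList this
  simp [L] at this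

end AmalgAux

/-- `Z_G(C) = Z_A(C) ∪ Z_B(C)`: a nontrivial `c ∈ C` is conjugated into `C` by some element of
`G ∖ C` iff it is conjugated into `C` by some element of `(A ∪ B) ∖ C`. -/
theorem ZG_eq_ZA_union_ZB
    (hφ : Function.Injective φ) (hψ : Function.Injective ψ)
    (c : Amalg φ ψ) (hc : c ∈ amalgC φ ψ) (hc1 : c ≠ 1) :
    (∃ g : Amalg φ ψ, g ∉ amalgC φ ψ ∧ g⁻¹ * c * g ∈ amalgC φ ψ) ↔
    (∃ q : Amalg φ ψ, (q ∈ facA φ ψ ∨ q ∈ facB φ ψ) ∧ q ∉ amalgC φ ψ ∧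
      q⁻¹ * c * q ∈ amalgC φ ψ) := by
  have hinj : ∀ b, Function.Injective (amalgHom φ ψ b) := by
    intro b; cases b
    · exact hψ
    · exact hφ
  constructor
  · rintro ⟨g, hgC, hgconj⟩
    obtain ⟨h, w, hw, rfl⟩ := AmalgAux.exists_reduced_word (φ := amalgHom φ ψ) hinj g
    rcases hht : w.toList with _ | ⟨⟨i, g₁⟩, t⟩
    · exfalso
      apply hgC
      have hw1 : w.prod = 1 := by rw [Monoid.CoprodI.Word.prod, hht]; simp
      rw [hw1, map_one, mul_one]
      exact ⟨h, rfl⟩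
    · obtain ⟨c₀, hc₀⟩ := hc
      have hconj' : (Monoid.PushoutI.ofCoprodI w.prod)⁻¹ *
          Monoid.PushoutI.base (amalgHom φ ψ) (h⁻¹ * c₀ * h) *
          Monoid.PushoutI.ofCoprodI w.prod ∈ (Monoid.PushoutI.base (amalgHom φ ψ)).range := by
        have heq : (Monoid.PushoutI.ofCoprodI w.prod)⁻¹ *
            Monoid.PushoutI.base (amalgHom φ ψ) (h⁻¹ * c₀ * h) *
            Monoid.PushoutI.ofCoprodI w.prod =
            (Monoid.PushoutI.base (amalgHom φ ψ) h * Monoid.PushoutI.ofCoprodI w.prod)⁻¹ * c *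
            (Monoid.PushoutI.base (amalgHom φ ψ) h * Monoid.PushoutI.ofCoprodI w.prod) := by
          rw [← hc₀]
          simp [map_mul, map_inv, mul_assoc]
        rw [heq]
        exact hgconj
      have key := AmalgAux.conj_letter hinj (h⁻¹ * c₀ * h) hw hht hconj'
      obtain ⟨y, hy⟩ := key
      refine ⟨Monoid.PushoutI.of (φ := amalgHom φ ψ) i (amalgHom φ ψ i h * g₁), ?_, ?_, ?_⟩
      · cases i
        · exact Or.inr ⟨_, rfl⟩
        · exact Or.inl ⟨_, rfl⟩
      · intro hq
        obtain ⟨z, hz⟩ := AmalgAux.of_mem_base hinj hq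
        refine hw ⟨i, g₁⟩ (hht ▸ List.mem_cons_self) ⟨h⁻¹ * z, ?_⟩
        rw [map_mul, hz, map_inv]
        group
      · refine ⟨y, ?_⟩
        rw [← hc₀, ← Monoid.PushoutI.of_apply_eq_base (amalgHom φ ψ) i y, hy,
          ← Monoid.PushoutI.of_apply_eq_base (amalgHom φ ψ) i c₀]
        simp [map_mul, map_inv, mul_assoc]
  · rintro ⟨q, _, hq2, hq3⟩
    exact ⟨q, hq2, hq3⟩
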